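/- arXiv:2306.12582 — 3 statements merged into one kernel-verified Lean document; each statement's English description precedes it below -/
import Mathlib

section
/- For every x, θ in ℝ^d, every y ∈ ℝ and every ε ≥ 0, the supremum of the squared linear-regression loss over an L2 ball of adversarial perturbations admits the closed form sup_{z : ‖z−x‖₂ ≤ ε} (zᵀθ − y)² = (|xᵀθ − y| + ε‖θ‖₂)². -/
open scoped RealInnerProductSpace

/-- For every `x, θ ∈ ℝ^d`, `y ∈ ℝ` and `ε ≥ 0`, the supremum of the squared
linear-regression loss over the closed Euclidean ball of adversarial perturbations admits the
closed form `sup_{‖z − x‖₂ ≤ ε} (zᵀθ − y)² = (|xᵀθ − y| + ε‖θ‖₂)²`. -/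
theorem adversarial_sq_loss_sup (d : ℕ) (x θ : EuclideanSpace ℝ (Fin d)) (y ε : ℝ)
    (hε : 0 ≤ ε) :
    sSup ((fun z : EuclideanSpace ℝ (Fin d) => (⟪z, θ⟫ - y) ^ 2) '' Metric.closedBall x ε)
      = (|⟪x, θ⟫ - y| + ε * ‖θ‖) ^ 2 := by
  set c : ℝ := ⟪x, θ⟫ - y with hc
  apply IsGreatest.csSup_eq
  constructor
  · -- the value is attained
    by_cases hθ : θ = 0
    · refine ⟨x, Metric.mem_closedBall_self hε, ?_⟩
      simp [hθ, sq_abs, hc]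
    · have hθn : (0:ℝ) < ‖θ‖ := norm_pos_iff.mpr hθ
      set s : ℝ := if 0 ≤ c then ε / ‖θ‖ else -(ε / ‖θ‖) with hs
      refine ⟨x + s • θ, ?_, ?_⟩
      · simp only [Metric.mem_closedBall, dist_eq_norm, add_sub_cancel_left, norm_smul]
        have : |s| = ε / ‖θ‖ := by
          rcases le_or_gt 0 c with h | h
          · simp [hs, h, abs_of_nonneg, div_nonneg hε hθn.le]
          · simp [hs, not_le.mpr h, abs_of_nonneg, div_nonneg hε hθn.le]
        rw [Real.norm_eq_abs, this, div_mul_cancel₀ _ hθn.ne']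
      · have hin : ⟪x + s • θ, θ⟫ = ⟪x, θ⟫ + s * ‖θ‖ ^ 2 := by
          rw [inner_add_left, real_inner_smul_left, real_inner_self_eq_norm_sq]
        simp only [hin]
        have key : ⟪x, θ⟫ + s * ‖θ‖ ^ 2 - y = c + s * ‖θ‖ ^ 2 := by rw [hc]; ring
        rw [key]
        rcases le_or_gt 0 c with h | h
        · have : s * ‖θ‖ ^ 2 = ε * ‖θ‖ := by
            rw [hs, if_pos h]; field_simp
          rw [this, abs_of_nonneg h]
        · have : s * ‖θ‖ ^ 2 = -(ε * ‖θ‖) := by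
            rw [hs, if_neg (not_le.mpr h)]; field_simp
          rw [this, abs_of_neg h]; ring
  · -- upper bound
    rintro v ⟨z, hz, rfl⟩
    have h1 : |⟪z, θ⟫ - y| ≤ |c| + ε * ‖θ‖ := by
      have : ⟪z, θ⟫ - y = c + ⟪z - x, θ⟫ := by
        rw [hc, inner_sub_left]; ring
      rw [this]
      calc |c + ⟪z - x, θ⟫| ≤ |c| + |⟪z - x, θ⟫| := abs_add_le _ _
        _ ≤ |c| + ‖z - x‖ * ‖θ‖ := by
            gcongr; exact abs_real_inner_le_norm _ _
        _ ≤ |c| + ε * ‖θ‖ := by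
            gcongr
            rw [Metric.mem_closedBall, dist_eq_norm] at hz
            exact hz
    calc (⟪z, θ⟫ - y) ^ 2 = |⟪z, θ⟫ - y| ^ 2 := (sq_abs _).symm
      _ ≤ (|c| + ε * ‖θ‖) ^ 2 := by gcongr
end

section
/- In the two-stage adversarial training with infinitely many generated data (n₂ = ∞), Σ = I_d, attack strength ε > 0, noise level σ² > 0 and clean ridge estimate θ̂₀(λ) ≠ 0, the second-stage estimator θ̃_ε(λ) — the minimizer over θ of R(θ) = ‖θ − θ̂₀(λ)‖₂² + σ² + 2 c₀ ε ‖θ‖₂ √(‖θ − θ̂₀(λ)‖₂² + σ²) + ε² ‖θ‖₂² — equals θ̃_ε(λ) = θ̂₀(λ)/(1 + α_ε(λ)), so that ‖θ̃_ε(λ)‖₂² = ‖θ̂₀(λ)‖₂²/(1+α_ε(λ))² and ‖θ̃_ε(λ) − θ₀‖₂² = ‖θ̂₀(λ)‖₂²/(1+α_ε(λ))² + ‖θ₀‖₂² − (2/(1+α_ε(λ))) θ̂₀(λ)ᵀθ₀, where α = α_ε(λ) ≥ 0 is the solution of α + ε c₀ α‖θ̂₀(λ)‖₂ / √( ‖θ̂₀(λ)‖₂²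 α² + σ²(1+α)² ) = ε c₀ √( ‖θ̂₀(λ)‖₂² α² + σ²(1+α)² ) / ‖θ̂₀(λ)‖₂ + ε². -/
set_option maxHeartbeats 1000000


open scoped RealInnerProductSpace

/-- The population adversarial risk of `θ` when pseudo-responses are generated from the base
model `b` with noise variance `σ²` and standard Gaussian features (`c₀ = √(2/π)`). -/
noncomputable def advRisk {d : ℕ} (ε σ2 : ℝ) (b θ : EuclideanSpace ℝ (Fin d)) : ℝ :=
  ‖θ - b‖ ^ 2 + σ2 + 2 * Real.sqrt (2 / Real.pi) * ε * ‖θ‖ *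
    Real.sqrt (‖θ - b‖ ^ 2 + σ2) + ε ^ 2 * ‖θ‖ ^ 2

/-- Cauchy–Schwarz in the lifted space: `⟪w,v⟫ + σ² ≤ √(‖w‖²+σ²)·√(‖v‖²+σ²)`. -/
lemma aux_cs {d : ℕ} (w v : EuclideanSpace ℝ (Fin d)) (σ2 : ℝ) (hσ2 : 0 ≤ σ2) :
    ⟪w, v⟫ + σ2 ≤ Real.sqrt (‖w‖ ^ 2 + σ2) * Real.sqrt (‖v‖ ^ 2 + σ2) := by
  have h1 : ⟪w, v⟫ ≤ ‖w‖ * ‖v‖ := real_inner_le_norm w v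
  have h2 : (‖w‖ * ‖v‖ + σ2) ^ 2 ≤ (‖w‖ ^ 2 + σ2) * (‖v‖ ^ 2 + σ2) := by
    nlinarith [sq_nonneg (‖w‖ - ‖v‖), hσ2]
  have h3 : ‖w‖ * ‖v‖ + σ2 ≤ Real.sqrt ((‖w‖ ^ 2 + σ2) * (‖v‖ ^ 2 + σ2)) := by
    have := Real.sqrt_le_sqrt h2
    rwa [Real.sqrt_sq (by positivity)] at this
  rw [Real.sqrt_mul (by positivity)] at h3
  linarith

/-- The scalar heart of the minimization. -/
lemma key_scalar (B S U c ε σ2 α t p : ℝ) (hB : 0 < B) (hS : 0 < S)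
    (hc : 0 ≤ c) (hc1 : c ^ 2 ≤ 1) (hε : 0 < ε) (hσ2 : 0 < σ2) (hα : 0 ≤ α)
    (hS2 : S ^ 2 = B ^ 2 * α ^ 2 + σ2 * (1 + α) ^ 2)
    (hfix : α * S * B + ε * c * α * B ^ 2 = ε * c * S ^ 2 + ε ^ 2 * S * B)
    (h1 : p ≤ B * t) (h2 : 2 * p * (1 + α) - B ^ 2 ≤ (1 + α) ^ 2 * t ^ 2)
    (h3 : (1 + α) * σ2 - α * (p - B ^ 2) ≤ U * S) :
    (B ^ 2 * α ^ 2 + σ2 * (1 + α) ^ 2 + 2 * c * ε * B * S + ε ^ 2 * B ^ 2) / (1 + α) ^ 2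
      ≤ U ^ 2 + 2 * c * ε * t * U + ε ^ 2 * t ^ 2 := by
  have hq : (0:ℝ) < 1 + α := by linarith
  have hγ : (S + c * ε * B) * (c * ε * S - α * B) + (1 - c ^ 2) * ε ^ 2 * B * S = 0 := by
    linear_combination (-1 : ℝ) * hfix
  have ha' : 0 ≤ S + c * ε * B := by positivity
  have hT1 : 0 ≤ B * S * ((1 + α) * U + c * ε * (1 + α) * t - (S + c * ε * B)) ^ 2 := by
    positivity
  have hT2 : 0 ≤ 2 * (S + c * ε * B) * (1 + α) * B *
      (U * S - ((1 + α) * σ2 - α * (p - B ^ 2))) := by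
    have : 0 ≤ U * S - ((1 + α) * σ2 - α * (p - B ^ 2)) := by linarith
    have h4 : 0 ≤ 2 * (S + c * ε * B) * (1 + α) * B := by positivity
    exact mul_nonneg h4 this
  have hT3 : 0 ≤ 2 * (S + c * ε * B) * (c * ε) * (1 + α) * S * (B * t - p) := by
    have : 0 ≤ B * t - p := by linarith
    have h4 : 0 ≤ 2 * (S + c * ε * B) * (c * ε) * (1 + α) * S := by positivity
    exact mul_nonneg h4 this
  have hT4 : 0 ≤ (1 - c ^ 2) * ε ^ 2 * B * S *
      ((1 + α) ^ 2 * t ^ 2 - (2 * p * (1 + α) - B ^ 2)) := by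
    have h5 : 0 ≤ (1 + α) ^ 2 * t ^ 2 - (2 * p * (1 + α) - B ^ 2) := by linarith
    have h4 : 0 ≤ (1 - c ^ 2) * ε ^ 2 * B * S := by
      have : 0 ≤ 1 - c ^ 2 := by linarith
      positivity
    exact mul_nonneg h4 h5
  have key : B * S * (1 + α) ^ 2 * (U ^ 2 + 2 * c * ε * t * U + ε ^ 2 * t ^ 2)
      - B * S * (B ^ 2 * α ^ 2 + σ2 * (1 + α) ^ 2 + 2 * c * ε * B * S + ε ^ 2 * B ^ 2)
      = B * S * ((1 + α) * U + c * ε * (1 + α) * t - (S + c * ε * B)) ^ 2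
        + 2 * (S + c * ε * B) * (1 + α) * B *
            (U * S - ((1 + α) * σ2 - α * (p - B ^ 2)))
        + 2 * (S + c * ε * B) * (c * ε) * (1 + α) * S * (B * t - p)
        + (1 - c ^ 2) * ε ^ 2 * B * S *
            ((1 + α) ^ 2 * t ^ 2 - (2 * p * (1 + α) - B ^ 2)) := by
    linear_combination (2 * (1 + α) * p - 2 * B ^ 2) * hγ + (-(B * S) - 2 * B ^ 2 * c * ε) * hS2
  rw [div_le_iff₀ (by positivity)]
  nlinarith [mul_pos hB hS, key, hT1, hT2, hT3, hT4]

/-- In the two-stage adversarial training with infinitely many generated data,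
`Σ = I_d`, attack strength `ε > 0`, noise level `σ² > 0` and nonzero clean ridge estimate
`θ̂₀(λ)`, the second-stage estimator — the minimizer of the population adversarial risk
`R(θ) = ‖θ − θ̂₀‖₂² + σ² + 2c₀ε‖θ‖₂√(‖θ − θ̂₀‖₂² + σ²) + ε²‖θ‖₂²` — equals
`θ̂₀/(1 + α)`, so that `‖θ̃‖₂² = ‖θ̂₀‖₂²/(1+α)²` and
`‖θ̃ − θ₀‖₂² = ‖θ̂₀‖₂²/(1+α)² + ‖θ₀‖₂² − (2/(1+α)) θ̂₀ᵀθ₀`, where `α ≥ 0` solves the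
fixed-point equation
`α + εc₀α‖θ̂₀‖/√(‖θ̂₀‖²α² + σ²(1+α)²) = εc₀√(‖θ̂₀‖²α² + σ²(1+α)²)/‖θ̂₀‖ + ε²`. -/
theorem two_stage_second_stage_minimizer (d : ℕ) (θ₀ θhat : EuclideanSpace ℝ (Fin d))
    (hθhat : θhat ≠ 0) (ε σ2 α : ℝ) (hε : 0 < ε) (hσ2 : 0 < σ2) (hα : 0 ≤ α)
    (hfix : α + ε * Real.sqrt (2 / Real.pi) * (α * ‖θhat‖)
          / Real.sqrt (‖θhat‖ ^ 2 * α ^ 2 + σ2 * (1 + α) ^ 2)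
      = ε * Real.sqrt (2 / Real.pi)
          * Real.sqrt (‖θhat‖ ^ 2 * α ^ 2 + σ2 * (1 + α) ^ 2) / ‖θhat‖ + ε ^ 2) :
    (∀ θ : EuclideanSpace ℝ (Fin d),
        advRisk ε σ2 θhat ((1 / (1 + α)) • θhat) ≤ advRisk ε σ2 θhat θ)
    ∧ ‖(1 / (1 + α)) • θhat‖ ^ 2 = ‖θhat‖ ^ 2 / (1 + α) ^ 2
    ∧ ‖(1 / (1 + α)) • θhat - θ₀‖ ^ 2
        = ‖θhat‖ ^ 2 / (1 + α) ^ 2 + ‖θ₀‖ ^ 2 - (2 / (1 + α)) * ⟪θhat, θ₀⟫ := by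
  have hq : (0:ℝ) < 1 + α := by linarith
  set B := ‖θhat‖ with hBdef
  have hB : 0 < B := norm_pos_iff.mpr hθhat
  set c := Real.sqrt (2 / Real.pi) with hcdef
  have hc : 0 ≤ c := Real.sqrt_nonneg _
  have hc2 : c ^ 2 = 2 / Real.pi := Real.sq_sqrt (by positivity)
  have hc1 : c ^ 2 ≤ 1 := by
    rw [hc2, div_le_one Real.pi_pos]; linarith [Real.pi_gt_three]
  set S := Real.sqrt (B ^ 2 * α ^ 2 + σ2 * (1 + α) ^ 2) with hSdef
  have hS : 0 < S := Real.sqrt_pos.mpr (by positivity)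
  have hS2 : S ^ 2 = B ^ 2 * α ^ 2 + σ2 * (1 + α) ^ 2 := Real.sq_sqrt (by positivity)
  -- polynomial form of the fixed point equation
  have hfix' : α * S * B + ε * c * α * B ^ 2 = ε * c * S ^ 2 + ε ^ 2 * S * B := by
    field_simp at hfix
    linarith
  -- norms of the candidate
  have hn1 : ‖(1 / (1 + α)) • θhat‖ = B / (1 + α) := by
    rw [norm_smul, Real.norm_eq_abs, abs_of_pos (by positivity : (0:ℝ) < 1 / (1 + α))]
    rw [← hBdef]; field_simp
  have hsub : (1 / (1 + α)) • θhat - θhat = (-(α / (1 + α))) • θhat := by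
    have hcoef : (1:ℝ) / (1 + α) - 1 = -(α / (1 + α)) := by field_simp; ring
    calc (1 / (1 + α)) • θhat - θhat = ((1:ℝ) / (1 + α) - 1) • θhat := by
          rw [sub_smul, one_smul]
      _ = (-(α / (1 + α))) • θhat := by rw [hcoef]
  have hn2 : ‖(1 / (1 + α)) • θhat - θhat‖ = α * B / (1 + α) := by
    rw [hsub, norm_smul, Real.norm_eq_abs, abs_neg,
      abs_of_nonneg (by positivity : (0:ℝ) ≤ α / (1 + α)), ← hBdef]
    ring
  have hsq : Real.sqrt ((α * B / (1 + α)) ^ 2 + σ2) = S / (1 + α) := by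
    have h : (α * B / (1 + α)) ^ 2 + σ2 = (S / (1 + α)) ^ 2 := by
      rw [div_pow, div_pow, hS2]; field_simp
    rw [h, Real.sqrt_sq (by positivity)]
  have hstar : advRisk ε σ2 θhat ((1 / (1 + α)) • θhat)
      = (B ^ 2 * α ^ 2 + σ2 * (1 + α) ^ 2 + 2 * c * ε * B * S + ε ^ 2 * B ^ 2)
        / (1 + α) ^ 2 := by
    unfold advRisk
    rw [hn2, hn1, hsq, ← hcdef]
    field_simp
  refine ⟨?_, ?_, ?_⟩
  · intro θ
    set t := ‖θ‖ with htdef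
    set u := ‖θ - θhat‖ with hudef
    set U := Real.sqrt (u ^ 2 + σ2) with hUdef
    set p := ⟪θhat, θ⟫ with hpdef
    have hU0 : 0 ≤ U := Real.sqrt_nonneg _
    have hU2 : U ^ 2 = u ^ 2 + σ2 := Real.sq_sqrt (by positivity)
    have h1 : p ≤ B * t := real_inner_le_norm θhat θ
    have h2 : 2 * p * (1 + α) - B ^ 2 ≤ (1 + α) ^ 2 * t ^ 2 := by
      have hx : ‖(1 + α) • θ - θhat‖ ^ 2
          = ‖(1 + α) • θ‖ ^ 2 - 2 * ⟪(1 + α) • θ, θhat⟫ + ‖θhat‖ ^ 2 :=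
        norm_sub_sq_real _ _
      rw [norm_smul, Real.norm_eq_abs, abs_of_pos hq, real_inner_smul_left,
        real_inner_comm] at hx
      have h0 : 0 ≤ ‖(1 + α) • θ - θhat‖ ^ 2 := sq_nonneg _
      rw [hx] at h0
      rw [← hBdef, ← htdef, ← hpdef] at h0
      nlinarith [h0]
    have h3 : (1 + α) * σ2 - α * (p - B ^ 2) ≤ U * S := by
      have hcs := aux_cs ((-(α / (1 + α))) • θhat) (θ - θhat) σ2 hσ2.le
      rw [real_inner_smul_left, inner_sub_right, real_inner_self_eq_norm_sq,
        norm_smul, Real.norm_eq_abs, abs_neg,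
        abs_of_nonneg (by positivity : (0:ℝ) ≤ α / (1 + α))] at hcs
      have harg : (α / (1 + α) * ‖θhat‖) ^ 2 + σ2 = (S / (1 + α)) ^ 2 := by
        rw [div_pow, hS2, ← hBdef]; field_simp
      rw [harg, Real.sqrt_sq (by positivity), ← hBdef, ← hudef, ← hUdef, ← hpdef] at hcs
      have hmul := mul_le_mul_of_nonneg_left hcs hq.le
      have hL : (1 + α) * (-(α / (1 + α)) * (p - B ^ 2) + σ2)
          = (1 + α) * σ2 - α * (p - B ^ 2) := by field_simp; ring
      have hR : (1 + α) * (S / (1 + α) * U) = U * S := by field_simp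
      linarith [hmul, hL.symm.le, hR.le]
    have hk := key_scalar B S U c ε σ2 α t p hB hS hc hc1 hε hσ2 hα hS2 hfix' h1 h2 h3
    have hθval : advRisk ε σ2 θhat θ = U ^ 2 + 2 * c * ε * t * U + ε ^ 2 * t ^ 2 := by
      unfold advRisk
      rw [← hcdef, ← hudef, ← htdef, ← hUdef, hU2]
    rw [hstar, hθval]
    exact hk
  · rw [hn1, div_pow]
  · rw [norm_sub_sq_real, real_inner_smul_left, hn1, div_pow]
    ring
end

section
/- Fix n ∈ ℕ, ε > 0, λ ≥ 0 with λ + ε² > 0, and v ∈ ℝ^n. Define ℓ̄_ε(v; θ) = (1/n) Σ_{i=1}^n [ (|v_i| + ε‖θ‖₂)² + λ‖θ‖₂² ] for θ ∈ ℝ^d. Then the Fenchel conjugate in θ satisfies, for every q ∈ ℝ^d, ℓ̄_ε*(v; q) := sup_{θ∈ℝ^d} ( qᵀθ − ℓ̄_ε(v; θ) ) = (ε²/((λ+ε²) n²)) ( (n/(2ε)) ‖q‖₂ − ‖v‖₁ )₊² − (1/n)‖v‖₂², where (z)₊ = max(z, 0). Consequently, the conjugate of Δ ↦ ℓ̄_ε(v;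 θ₀ + Δ) is q ↦ −qᵀθ₀ + ℓ̄_ε*(v; q). -/
open scoped RealInnerProductSpace

lemma isGreatest_key (d : ℕ) (q : EuclideanSpace ℝ (Fin d)) (b c K : ℝ)
    (hb : 0 ≤ b) (hc : 0 < c) :
    IsGreatest (Set.range fun θ : EuclideanSpace ℝ (Fin d) =>
        ⟪q, θ⟫ - b * ‖θ‖ - c * ‖θ‖ ^ 2 - K)
      ((max (‖q‖ - b) 0) ^ 2 / (4 * c) - K) := by
  constructor
  · rcases le_or_gt ‖q‖ b with hqb | hqb
    · refine ⟨0, ?_⟩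
      simp [max_eq_right (by linarith : ‖q‖ - b ≤ 0)]
    · have hq0 : 0 < ‖q‖ := lt_of_le_of_lt hb hqb
      set a : ℝ := ‖q‖ - b with ha
      have ha0 : 0 < a := by simp [ha]; linarith
      set r : ℝ := a / (2 * c) with hr
      have hr0 : 0 ≤ r := by positivity
      refine ⟨(r / ‖q‖) • q, ?_⟩
      have hnorm : ‖(r / ‖q‖) • q‖ = r := by
        rw [norm_smul, Real.norm_eq_abs, abs_of_nonneg (by positivity)]
        field_simp
      have hinner : ⟪q, (r / ‖q‖) • q⟫ = r * ‖q‖ := by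
        rw [real_inner_smul_right, real_inner_self_eq_norm_sq]
        field_simp
      simp only [hnorm, hinner, max_eq_left ha0.le]
      have : r * ‖q‖ - b * r = a * r := by rw [ha]; ring
      rw [this, hr]
      field_simp
      ring
  · rintro x ⟨θ, rfl⟩
    have h1 : ⟪q, θ⟫ ≤ ‖q‖ * ‖θ‖ := real_inner_le_norm q θ
    set r : ℝ := ‖θ‖ with hrdef
    have hr0 : 0 ≤ r := norm_nonneg θ
    set m : ℝ := max (‖q‖ - b) 0 with hm
    have hm0 : 0 ≤ m := le_max_right _ _
    have h2 : ‖q‖ - b ≤ m := le_max_left _ _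
    have key : ‖q‖ * r - b * r - c * r ^ 2 ≤ m ^ 2 / (4 * c) := by
      rw [le_div_iff₀ (by positivity : (0:ℝ) < 4 * c)]
      nlinarith [sq_nonneg (m - 2 * c * r), mul_le_mul_of_nonneg_right h2 hr0]
    linarith

/-- (Fenchel conjugate of the adversarial loss.) For `n ∈ ℕ`, `ε > 0`,
`λ ≥ 0` with `λ + ε² > 0` and `v ∈ ℝ^n`, let
`ℓ̄_ε(v; θ) = (1/n) Σᵢ [(|vᵢ| + ε‖θ‖₂)² + λ‖θ‖₂²]`. Then for every `q ∈ ℝ^d`,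
`sup_θ (qᵀθ − ℓ̄_ε(v; θ)) = (ε²/((λ+ε²)n²)) ((n/(2ε))‖q‖₂ − ‖v‖₁)₊² − (1/n)‖v‖₂²`,
and the conjugate of `Δ ↦ ℓ̄_ε(v; θ₀ + Δ)` is `q ↦ −qᵀθ₀` plus the same expression. -/
theorem adversarial_loss_fenchel_conjugate (n d : ℕ) (hn : 0 < n) (ε lam : ℝ)
    (hε : 0 < ε) (hlam : 0 ≤ lam) (hsum : 0 < lam + ε ^ 2)
    (v : Fin n → ℝ) (q θ₀ : EuclideanSpace ℝ (Fin d)) :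
    sSup (Set.range fun θ : EuclideanSpace ℝ (Fin d) =>
        ⟪q, θ⟫ - (1 / (n : ℝ)) * ∑ i, ((|v i| + ε * ‖θ‖) ^ 2 + lam * ‖θ‖ ^ 2))
      = ε ^ 2 / ((lam + ε ^ 2) * (n : ℝ) ^ 2)
          * (max ((n : ℝ) / (2 * ε) * ‖q‖ - ∑ i, |v i|) 0) ^ 2
        - (1 / (n : ℝ)) * ∑ i, (v i) ^ 2
    ∧ sSup (Set.range fun Δ : EuclideanSpace ℝ (Fin d) =>
        ⟪q, Δ⟫ - (1 / (n : ℝ)) * ∑ i, ((|v i| + ε * ‖θ₀ + Δ‖) ^ 2 + lam * ‖θ₀ + Δ‖ ^ 2))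
      = -⟪q, θ₀⟫
        + (ε ^ 2 / ((lam + ε ^ 2) * (n : ℝ) ^ 2)
            * (max ((n : ℝ) / (2 * ε) * ‖q‖ - ∑ i, |v i|) 0) ^ 2
          - (1 / (n : ℝ)) * ∑ i, (v i) ^ 2) := by
  have hn0 : (0:ℝ) < n := Nat.cast_pos.mpr hn
  set S : ℝ := ∑ i, |v i| with hSdef
  set K : ℝ := (1 / (n : ℝ)) * ∑ i, (v i) ^ 2 with hKdef
  set b : ℝ := 2 * ε * S / (n : ℝ) with hbdef
  set c : ℝ := lam + ε ^ 2 with hcdef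
  have hS : 0 ≤ S := Finset.sum_nonneg fun i _ => abs_nonneg _
  have hb : 0 ≤ b := by positivity
  have hloss : ∀ s : ℝ,
      (1 / (n : ℝ)) * ∑ i, ((|v i| + ε * s) ^ 2 + lam * s ^ 2)
      = b * s + c * s ^ 2 + K := by
    intro s
    have hexp : ∑ i, ((|v i| + ε * s) ^ 2 + lam * s ^ 2)
        = (∑ i, (v i) ^ 2) + (2 * ε * s) * S + (n : ℝ) * (c * s ^ 2) := by
      have : ∀ i : Fin n, (|v i| + ε * s) ^ 2 + lam * s ^ 2
          = (v i) ^ 2 + (2 * ε * s) * |v i| + c * s ^ 2 := by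
        intro i
        rw [hcdef, ← sq_abs (v i)]
        ring
      rw [Finset.sum_congr rfl fun i _ => this i, Finset.sum_add_distrib,
        Finset.sum_add_distrib, ← Finset.mul_sum, Finset.sum_const,
        Finset.card_univ, Fintype.card_fin, nsmul_eq_mul, ← hSdef]
    rw [hexp, hbdef, hKdef]
    field_simp
    ring
  have hM : ε ^ 2 / (c * (n : ℝ) ^ 2) * (max ((n : ℝ) / (2 * ε) * ‖q‖ - S) 0) ^ 2
      = (max (‖q‖ - b) 0) ^ 2 / (4 * c) := by
    have h3 : (n : ℝ) / (2 * ε) * ‖q‖ - S = (n : ℝ) / (2 * ε) * (‖q‖ - b) := by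
      rw [hbdef]; field_simp
    have h4 : max ((n : ℝ) / (2 * ε) * (‖q‖ - b)) ((n : ℝ) / (2 * ε) * 0)
        = (n : ℝ) / (2 * ε) * max (‖q‖ - b) 0 :=
      (mul_max_of_nonneg _ _ (by positivity)).symm
    rw [h3, show (0:ℝ) = (n : ℝ) / (2 * ε) * 0 by ring, h4]
    rw [mul_pow]
    field_simp
    ring
  constructor
  · have hfun : (fun θ : EuclideanSpace ℝ (Fin d) =>
        ⟪q, θ⟫ - (1 / (n : ℝ)) * ∑ i, ((|v i| + ε * ‖θ‖) ^ 2 + lam * ‖θ‖ ^ 2))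
        = fun θ => ⟪q, θ⟫ - b * ‖θ‖ - c * ‖θ‖ ^ 2 - K := by
      funext θ
      rw [hloss ‖θ‖]; ring
    rw [hfun, (isGreatest_key d q b c K hb hsum).csSup_eq, hM]
  · have hsurj : Function.Surjective (fun Δ : EuclideanSpace ℝ (Fin d) => θ₀ + Δ) :=
      fun y => ⟨y - θ₀, by simp⟩
    have hfun : (fun Δ : EuclideanSpace ℝ (Fin d) =>
        ⟪q, Δ⟫ - (1 / (n : ℝ)) * ∑ i, ((|v i| + ε * ‖θ₀ + Δ‖) ^ 2 + lam * ‖θ₀ + Δ‖ ^ 2))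
        = (fun θ => ⟪q, θ⟫ - b * ‖θ‖ - c * ‖θ‖ ^ 2 - (K + ⟪q, θ₀⟫))
          ∘ (fun Δ => θ₀ + Δ) := by
      funext Δ
      simp only [Function.comp_apply]
      rw [hloss ‖θ₀ + Δ‖, inner_add_right]
      ring
    rw [hfun, Set.range_comp, hsurj.range_eq, Set.image_univ,
      (isGreatest_key d q b c (K + ⟪q, θ₀⟫) hb hsum).csSup_eq, hM]
    ring
end
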